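/- arXiv:2201.03015 — 2 statements merged into one kernel-verified Lean document; each statement's English description precedes it below -/
import Mathlib

section
/- As formal power series in q with integer coefficients, Σ_{n=0}^{∞} b_{v,r,a,m}(n) qⁿ = ∏_{n=1}^{∞} (1 − q^{v(pr+a)n})(1 − q^{pmn}) / ((1 − q^{(pr+a)n})(1 − q^{pn})). -/
open PowerSeries

/-- The product topology on `ℤ⟦q⟧` (coefficientwise convergence with `ℤ` discrete); the
infinite products below, whose factors are `≡ 1 (mod q)`, converge in this topology (their
partial products stabilize coefficientwise), so their `tprod` is the q-adic limit. -/
noncomputable instance : TopologicalSpace (PowerSeries ℤ) :=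
  inferInstanceAs (TopologicalSpace ((Unit →₀ ℕ) → ℤ))

/-- The multiplicative inverse of a power series whose constant coefficient is `1`. -/
noncomputable def psInv (f : PowerSeries ℤ) : PowerSeries ℤ := f.invOfUnit 1

/-- `b p a r m v n` is the number of partitions of `n` such that for every part, its
multiplicity is congruent to `j·a (mod p)` for some `0 ≤ j ≤ v - 1` and satisfies
`j(pr + a) ≤ multiplicity ≤ j(pr + a) + p(m - 1)`. -/
noncomputable def b (p a r m v n : ℕ) : ℕ :=
  Nat.card {π : n.Partition //
    ∀ i ∈ π.parts, ∃ j, j < v ∧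
      π.parts.count i ≡ j * a [MOD p] ∧
      j * (p * r + a) ≤ π.parts.count i ∧
      π.parts.count i ≤ j * (p * r + a) + p * (m - 1)}

namespace PartAux

open Finset
open scoped Classical

noncomputable section


/-- The set of allowed multiplicities. -/
def cSet (p a r m v : ℕ) : Set ℕ := {N | ∃ j < v, ∃ t < m, N = j * (p * r + a) + p * t}

theorem zero_mem_cSet {p a r m v : ℕ} (hm : 1 ≤ m) (hv : 1 ≤ v) : 0 ∈ cSet p a r m v :=
  ⟨0, hv, 0, hm, by simp⟩

theorem mem_cSet_iff {p a r m v : ℕ} (hp : 0 < p) (hm : 1 ≤ m) (N : ℕ) :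
    N ∈ cSet p a r m v ↔ ∃ j, j < v ∧ N ≡ j * a [MOD p] ∧
      j * (p * r + a) ≤ N ∧ N ≤ j * (p * r + a) + p * (m - 1) := by
  constructor
  · rintro ⟨j, hj, t, ht, rfl⟩
    refine ⟨j, hj, ?_, Nat.le_add_right _ _, ?_⟩
    · have : j * (p * r + a) + p * t = j * a + p * (j * r + t) := by ring
      rw [this]
      calc j * a + p * (j * r + t) ≡ j * a + 0 [MOD p] :=
            Nat.ModEq.add_left _ ((Nat.modEq_zero_iff_dvd).2 ⟨j * r + t, rfl⟩)
        _ = j * a := by ring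
    · have : t ≤ m - 1 := by omega
      exact Nat.add_le_add_left (Nat.mul_le_mul_left p this) _
  · rintro ⟨j, hj, hmod, hle, hub⟩
    have h1 : j * (p * r + a) ≡ j * a [MOD p] := by
      have : j * (p * r + a) = j * a + p * (j * r) := by ring
      rw [this]
      calc j * a + p * (j * r) ≡ j * a + 0 [MOD p] :=
            Nat.ModEq.add_left _ ((Nat.modEq_zero_iff_dvd).2 ⟨j * r, rfl⟩)
        _ = j * a := by ring
    have h2 : j * (p * r + a) ≡ N [MOD p] := h1.trans hmod.symm
    obtain ⟨t, ht⟩ := (Nat.modEq_iff_dvd' hle).1 h2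
    have hN : N = j * (p * r + a) + p * t := by omega
    refine ⟨j, hj, t, ?_, hN⟩
    have : p * t ≤ p * (m - 1) := by omega
    have := Nat.le_of_mul_le_mul_left this hp
    omega

theorem cSet_injOn {p a r m v : ℕ} (hp : 0 < p) (hco : Nat.gcd a p = 1) (hvp : v ≤ p)
    {i : ℕ} (hi : 0 < i) :
    Set.InjOn (fun x : ℕ × ℕ => (x.1 * (p * r + a) + p * x.2) * i)
      ↑(range v ×ˢ range m) := by
  rintro ⟨j, t⟩ hjt ⟨j', t'⟩ hjt' h
  simp only [coe_product, Set.mem_prod, mem_coe, mem_range] at hjt hjt'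
  simp only at h
  have h' : j * (p * r + a) + p * t = j' * (p * r + a) + p * t' :=
    Nat.eq_of_mul_eq_mul_right hi h
  have hmod : ∀ j t : ℕ, j * (p * r + a) + p * t ≡ a * j [MOD p] := by
    intro j t
    have : j * (p * r + a) + p * t = a * j + p * (j * r + t) := by ring
    rw [this]
    calc a * j + p * (j * r + t) ≡ a * j + 0 [MOD p] :=
          Nat.ModEq.add_left _ ((Nat.modEq_zero_iff_dvd).2 ⟨j * r + t, rfl⟩)
      _ = a * j := by ring
    
  have hjj : a * j ≡ a * j' [MOD p] := ((hmod j t).symm.trans (h' ▸ hmod j' t'))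
  have hjj' : j ≡ j' [MOD p] := hjj.cancel_left_of_coprime (by rwa [Nat.gcd_comm])
  have : j = j' := by
    have := hjj'
    unfold Nat.ModEq at this
    rw [Nat.mod_eq_of_lt (lt_of_lt_of_le hjt.1 hvp),
        Nat.mod_eq_of_lt (lt_of_lt_of_le hjt'.1 hvp)] at this
    exact this
  subst this
  have : t = t' := by
    have : p * t = p * t' := by omega
    exact Nat.eq_of_mul_eq_mul_left hp this
  simp [this]


def indicatorSeries (α : Type*) [Semiring α] (s : Set ℕ) : PowerSeries α :=
  PowerSeries.mk fun n => if n ∈ s then 1 else 0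

theorem coeff_indicator {α : Type*} (s : Set ℕ) [Semiring α] (n : ℕ) :
    coeff (R := α) n (indicatorSeries _ s) = if n ∈ s then 1 else 0 :=
  coeff_mk _ _


/-- `f` agrees with `1` in degrees `≤ n`. -/
def OneUpTo (n : ℕ) (f : PowerSeries ℤ) : Prop :=
  coeff (R := ℤ) 0 f = 1 ∧ ∀ j, 0 < j → j ≤ n → coeff (R := ℤ) j f = 0

theorem OneUpTo.one (n : ℕ) : OneUpTo n 1 := by
  constructor
  · simp
  · intro j hj _; simp [coeff_one, hj.ne']

theorem OneUpTo.mul {n : ℕ} {f g : PowerSeries ℤ} (hf : OneUpTo n f) (hg : OneUpTo n g) :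
    OneUpTo n (f * g) := by
  constructor
  · rw [coeff_zero_eq_constantCoeff, map_mul]
    rw [← coeff_zero_eq_constantCoeff] at *
    rw [hf.1, hg.1, mul_one]
  · intro j hj hjn
    rw [coeff_mul]
    apply Finset.sum_eq_zero
    rintro ⟨x, y⟩ hxy
    rw [Finset.HasAntidiagonal.mem_antidiagonal] at hxy
    rcases Nat.eq_zero_or_pos x with hx | hx
    · have hy : 0 < y := by omega
      rw [hg.2 y hy (by omega), mul_zero]
    · rw [hf.2 x hx (by omega), zero_mul]

theorem OneUpTo.prod {n : ℕ} {β : Type*} (s : Finset β) (f : β → PowerSeries ℤ)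
    (h : ∀ k ∈ s, OneUpTo n (f k)) : OneUpTo n (∏ k ∈ s, f k) :=
  Finset.prod_induction f (OneUpTo n) (fun _ _ => OneUpTo.mul) (OneUpTo.one n) h

theorem coeff_mul_oneUpTo {n : ℕ} {f g : PowerSeries ℤ} (hg : OneUpTo n g) :
    coeff (R := ℤ) n (f * g) = coeff (R := ℤ) n f := by
  rw [coeff_mul, Finset.sum_eq_single (n, 0)]
  · show coeff (R := ℤ) n f * coeff (R := ℤ) 0 g = coeff (R := ℤ) n f
    rw [hg.1, mul_one]
  · rintro ⟨x, y⟩ hxy hne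
    rw [Finset.HasAntidiagonal.mem_antidiagonal] at hxy
    have hy : 0 < y := by
      rcases Nat.eq_zero_or_pos y with h0 | h0
      · exfalso; apply hne; simp [h0, ← hxy]
      · exact h0
    rw [hg.2 y hy (by omega), mul_zero]
  · intro h; exfalso; exact h (by simp [Finset.mem_antidiagonal])

theorem indicator_eq_sum {β : Type*} (F : Finset β) (g : β → ℕ)
    (hg : Set.InjOn g ↑F) :
    indicatorSeries ℤ (g '' ↑F) = ∑ x ∈ F, (X : PowerSeries ℤ) ^ (g x) := by
  ext n
  rw [coeff_indicator, map_sum]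
  simp_rw [coeff_X_pow]
  by_cases h : n ∈ g '' ↑F
  · obtain ⟨x0, hx0, hgx0⟩ := h
    rw [if_pos ⟨x0, hx0, hgx0⟩, Finset.sum_eq_single x0]
    · rw [if_pos hgx0.symm]
    · intro x hx hne
      rw [if_neg]
      intro hnx
      exact hne (hg hx hx0 (hnx ▸ hgx0).symm ▸ rfl)
    · intro hx0'; exact absurd hx0 hx0'
  · rw [if_neg h]
    symm
    apply Finset.sum_eq_zero
    intro x hx
    rw [if_neg]
    intro hnx
    exact h ⟨x, hx, hnx.symm⟩

theorem geom_aux (d w : ℕ) :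
    (∑ j ∈ range w, (X : PowerSeries ℤ) ^ (d * j)) * (1 - X ^ d) = 1 - X ^ (d * w) := by
  simp_rw [pow_mul]
  have := geom_sum_mul ((X : PowerSeries ℤ) ^ d) w
  linear_combination -this

theorem mul_psInv (d : ℕ) (hd : 0 < d) :
    (1 - (X : PowerSeries ℤ) ^ d) * psInv (1 - X ^ d) = 1 := by
  apply mul_invOfUnit
  simp [zero_pow hd.ne', map_pow]

theorem helper_ring {R : Type*} [CommRing R] (s1 s2 A B A' B' : R)
    (h1 : A * A' = 1) (h2 : B * B' = 1) : s1 * A * (s2 * B) * A' * B' = s1 * s2 := by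
  calc s1 * A * (s2 * B) * A' * B' = s1 * s2 * (A * A') * (B * B') := by ring
    _ = s1 * s2 := by rw [h1, h2, mul_one, mul_one]


theorem oneUpTo_indicator {n : ℕ} (S : Set ℕ) (h0 : 0 ∈ S) (hS : ∀ x ∈ S, 0 < x → n < x) :
    OneUpTo n (indicatorSeries ℤ S) := by
  constructor
  · rw [coeff_indicator, if_pos h0]
  · intro j hj hjn
    rw [coeff_indicator, if_neg]
    intro hjS
    exact absurd (hS j hjS hj) (by omega)

theorem factor_eq (p a r m v : ℕ) (hp : 0 < p) (ha : 0 < a) (hco : Nat.gcd a p = 1)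
    (hvp : v ≤ p) {i : ℕ} (hi : 0 < i) :
    indicatorSeries ℤ ((· * i) '' cSet p a r m v) =
      (1 - (X : PowerSeries ℤ) ^ (v * (p * r + a) * i)) *
        (1 - (X : PowerSeries ℤ) ^ (p * m * i)) *
        psInv (1 - (X : PowerSeries ℤ) ^ ((p * r + a) * i)) *
        psInv (1 - (X : PowerSeries ℤ) ^ (p * i)) := by
  have himg : (· * i) '' cSet p a r m v =
      (fun x : ℕ × ℕ => (x.1 * (p * r + a) + p * x.2) * i) '' ↑(range v ×ˢ range m) := by
    ext N
    simp only [cSet, Set.mem_image, Set.mem_setOf_eq, coe_product, Set.mem_prod, mem_coe,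
      mem_range, Prod.exists]
    constructor
    · rintro ⟨M, ⟨j, hj, t, ht, rfl⟩, rfl⟩; exact ⟨j, t, ⟨hj, ht⟩, rfl⟩
    · rintro ⟨j, t, ⟨hj, ht⟩, rfl⟩; exact ⟨_, ⟨j, hj, t, ht, rfl⟩, rfl⟩
  rw [himg, indicator_eq_sum _ _ (cSet_injOn hp hco hvp hi), Finset.sum_product]
  have hexp : ∀ j t : ℕ, (j * (p * r + a) + p * t) * i = (p * r + a) * i * j + p * i * t :=
    fun j t => by ring
  simp_rw [hexp, pow_add, ← Finset.mul_sum, ← Finset.sum_mul]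
  have g1 := geom_aux ((p * r + a) * i) v
  have g2 := geom_aux (p * i) m
  have e1 : v * (p * r + a) * i = (p * r + a) * i * v := by ring
  have e2 : p * m * i = p * i * m := by ring
  rw [e1, e2, ← g1, ← g2]
  exact (helper_ring _ _ _ _ _ _
    (mul_psInv _ (by positivity)) (mul_psInv _ (by positivity))).symm

theorem oneUpTo_factor (p a r m v : ℕ) (hm : 1 ≤ m) (hv : 1 ≤ v) {n i : ℕ} (hni : n < i) :
    OneUpTo n (indicatorSeries ℤ ((· * i) '' cSet p a r m v)) := by
  apply oneUpTo_indicator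
  · exact ⟨0, zero_mem_cSet hm hv, by simp⟩
  · rintro x ⟨c, _, rfl⟩ hx
    simp only at hx ⊢
    have hc : 0 < c := by by_contra hc0; push_neg at hc0; interval_cases c; simp at hx
    calc n < i := hni
      _ ≤ c * i := Nat.le_mul_of_pos_left i hc

-- The main workhorse of the partition theorem proof.
theorem partialGF_prop (α : Type*) [CommSemiring α] (n : ℕ) (s : Finset ℕ) (hs : ∀ i ∈ s, 0 < i)
    (c : ℕ → Set ℕ) (hc : ∀ i, i ∉ s → 0 ∈ c i) :
    #{p : n.Partition | (∀ j, p.parts.count j ∈ c j) ∧ ∀ j ∈ p.parts, j ∈ s} =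
      coeff (R := α) n (∏ i ∈ s, indicatorSeries α ((· * i) '' c i)) := by
  simp_rw [coeff_prod, coeff_indicator, prod_boole, sum_boole]
  apply congr_arg
  simp only [mem_univ, forall_true_left, not_and, not_forall, exists_prop,
    Set.mem_image, not_exists]
  set φ : (a : Nat.Partition n) →
    a ∈ filter (fun p ↦ (∀ (j : ℕ), Multiset.count j p.parts ∈ c j) ∧ ∀ j ∈ p.parts, j ∈ s) univ →
    ℕ →₀ ℕ := fun p _ => {
      toFun := fun i => Multiset.count i p.parts • i
      support := Finset.filter (fun i => i ≠ 0) p.parts.toFinset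
      mem_support_toFun := fun a => by
        simp only [smul_eq_mul, ne_eq, mul_eq_zero, Multiset.count_eq_zero]
        rw [not_or, not_not]
        simp only [Multiset.mem_toFinset, not_not, mem_filter] }
  refine Finset.card_bij φ ?_ ?_ ?_
  · intro a ha
    simp only [φ, not_forall, not_exists, not_and, exists_prop, mem_filter]
    rw [mem_finsuppAntidiag]
    dsimp only [ne_eq, smul_eq_mul, id_eq, eq_mpr_eq_cast, le_eq_subset, Finsupp.coe_mk]
    simp only [mem_univ, forall_true_left, not_and, not_forall, exists_prop,
      mem_filter, true_and] at ha
    refine ⟨⟨?_, fun i ↦ ?_⟩, fun i _ ↦ ⟨a.parts.count i, ha.1 i, rfl⟩⟩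
    · conv_rhs => simp [← a.parts_sum]
      rw [sum_multiset_count_of_subset _ s]
      · simp only [smul_eq_mul]
      · intro i
        simp only [Multiset.mem_toFinset, not_not, mem_filter]
        apply ha.2
    · simp only [ne_eq, Multiset.mem_toFinset, not_not, mem_filter, and_imp]
      exact fun hi _ ↦ ha.2 i hi
  · intro p₁ hp₁ p₂ hp₂ h
    apply Nat.Partition.ext
    simp only [true_and, mem_univ, mem_filter] at hp₁ hp₂
    ext i
    simp only [φ, ne_eq, Multiset.mem_toFinset, not_not, smul_eq_mul, Finsupp.mk.injEq] at h
    by_cases hi : i = 0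
    · rw [hi]
      rw [Multiset.count_eq_zero_of_notMem]
      · rw [Multiset.count_eq_zero_of_notMem]
        intro a; exact Nat.lt_irrefl 0 (hs 0 (hp₂.2 0 a))
      intro a; exact Nat.lt_irrefl 0 (hs 0 (hp₁.2 0 a))
    · rw [← mul_left_inj' hi]
      rw [funext_iff] at h
      exact h.2 i
  · simp only [φ, mem_filter, mem_finsuppAntidiag, mem_univ, exists_prop, true_and, and_assoc]
    rintro f ⟨hf, hf₃, hf₄⟩
    have hf' : f ∈ finsuppAntidiag s n := mem_finsuppAntidiag.mpr ⟨hf, hf₃⟩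
    simp only [mem_finsuppAntidiag] at hf'
    refine ⟨⟨∑ i ∈ s, Multiset.replicate (f i / i) i, ?_, ?_⟩, ?_, ?_, ?_⟩
    · intro i hi
      simp only [exists_prop, Multiset.mem_sum, mem_map, Function.Embedding.coeFn_mk] at hi
      rcases hi with ⟨t, ht, z⟩
      apply hs
      rwa [Multiset.eq_of_mem_replicate z]
    · simp_rw [Multiset.sum_sum, Multiset.sum_replicate, Nat.nsmul_eq_mul]
      rw [← hf'.1]
      refine sum_congr rfl fun i hi => Nat.div_mul_cancel ?_
      rcases hf₄ i hi with ⟨w, _, hw₂⟩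
      rw [← hw₂]
      exact dvd_mul_left _ _
    · intro i
      simp_rw [Multiset.count_sum', Multiset.count_replicate, sum_ite_eq']
      split_ifs with h
      · rcases hf₄ i h with ⟨w, hw₁, hw₂⟩
        rwa [← hw₂, Nat.mul_div_cancel _ (hs i h)]
      · exact hc _ h
    · intro i hi
      rw [Multiset.mem_sum] at hi
      rcases hi with ⟨j, hj₁, hj₂⟩
      rwa [Multiset.eq_of_mem_replicate hj₂]
    · ext i
      simp_rw [Multiset.count_sum', Multiset.count_replicate, sum_ite_eq']
      simp only [ne_eq, Multiset.mem_toFinset, not_not, smul_eq_mul, ite_mul,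
        zero_mul, Finsupp.coe_mk]
      split_ifs with h
      · apply Nat.div_mul_cancel
        rcases hf₄ i h with ⟨w, _, hw₂⟩
        apply Dvd.intro_left _ hw₂
      · apply symm
        rw [← Finsupp.notMem_support_iff]
        exact notMem_mono hf'.2 h


theorem b_count (p a r m v : ℕ) (hp : 0 < p) (hm : 1 ≤ m) (hv : 1 ≤ v)
    (n N : ℕ) (hn : n ≤ N) :
    ((b p a r m v n : ℤ)) =
      coeff (R := ℤ) n (∏ k ∈ range N, indicatorSeries ℤ ((· * (k + 1)) '' cSet p a r m v)) := by
  have hprop := partialGF_prop ℤ n ((range N).image (· + 1))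
    (by intro i hi; simp only [mem_image, mem_range] at hi; omega)
    (fun _ => cSet p a r m v) (fun _ _ => zero_mem_cSet hm hv)
  rw [Finset.prod_image (by intro x _ y _ h; simp only at h; omega)] at hprop
  rw [← hprop]
  norm_cast
  rw [b, Nat.card_eq_fintype_card, Fintype.card_subtype]
  apply congrArg Finset.card
  ext π
  simp only [mem_filter, mem_univ, true_and, Set.mem_setOf_eq]
  constructor
  · intro h
    constructor
    · intro j
      by_cases hj : j ∈ π.parts
      · exact (mem_cSet_iff hp hm _).2 (h j hj)
      · rw [Multiset.count_eq_zero_of_notMem hj]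
        exact zero_mem_cSet hm hv
    · intro j hj
      have h1 : 0 < j := π.parts_pos hj
      have h2 : j ≤ n := by
        have := Multiset.single_le_sum (fun x _ => Nat.zero_le x) j hj
        rwa [π.parts_sum] at this
      rw [mem_image]
      exact ⟨j - 1, mem_range.2 (by omega), by omega⟩
  · rintro ⟨h1, _⟩ i _
    exact (mem_cSet_iff hp hm _).1 (h1 i)

end
end PartAux

/-- The generating function identity
`Σ_{n≥0} b_{v,r,a,m}(n) qⁿ
  = ∏_{n≥1} (1 - q^{v(pr+a)n})(1 - q^{pmn}) / ((1 - q^{(pr+a)n})(1 - q^{pn}))`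
(the product index below is shifted: `k + 1` plays the role of `n ≥ 1`). -/
theorem b_genFun (p a r m v : ℕ) (hp : 0 < p) (ha : 0 < a)
    (hco : Nat.gcd a p = 1) (hm : 1 ≤ m) (hv : 1 ≤ v) (hvp : v ≤ p) :
    PowerSeries.mk (fun n => (b p a r m v n : ℤ)) =
      ∏' k : ℕ,
        (1 - (X : PowerSeries ℤ) ^ (v * (p * r + a) * (k + 1))) *
          (1 - (X : PowerSeries ℤ) ^ (p * m * (k + 1))) *
          psInv (1 - (X : PowerSeries ℤ) ^ ((p * r + a) * (k + 1))) *
          psInv (1 - (X : PowerSeries ℤ) ^ (p * (k + 1))) := by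
  classical
  haveI : T2Space (PowerSeries ℤ) := inferInstanceAs (T2Space ((Unit →₀ ℕ) → ℤ))
  set G : ℕ → PowerSeries ℤ :=
    fun k => PartAux.indicatorSeries ℤ ((· * (k + 1)) '' PartAux.cSet p a r m v) with hG
  have hfac : ∀ k : ℕ,
      G k = (1 - (X : PowerSeries ℤ) ^ (v * (p * r + a) * (k + 1))) *
        (1 - (X : PowerSeries ℤ) ^ (p * m * (k + 1))) *
        psInv (1 - (X : PowerSeries ℤ) ^ ((p * r + a) * (k + 1))) *
        psInv (1 - (X : PowerSeries ℤ) ^ (p * (k + 1))) :=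
    fun k => PartAux.factor_eq p a r m v hp ha hco hvp (Nat.succ_pos k)
  have key : ∀ (n : ℕ) (s : Finset ℕ), Finset.range n ⊆ s →
      coeff (R := ℤ) n (∏ k ∈ s, G k) = (b p a r m v n : ℤ) := by
    intro n s hs
    rw [← Finset.prod_sdiff hs, mul_comm, PartAux.coeff_mul_oneUpTo]
    · exact (PartAux.b_count p a r m v hp hm hv n n le_rfl).symm
    · apply PartAux.OneUpTo.prod
      intro k hk
      rw [Finset.mem_sdiff, Finset.mem_range, not_lt] at hk
      exact PartAux.oneUpTo_factor p a r m v hm hv (by omega)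
  have hHP : HasProd G (PowerSeries.mk fun n => (b p a r m v n : ℤ)) := by
    show Filter.Tendsto (fun s : Finset ℕ => ∏ k ∈ s, G k) Filter.atTop
      (nhds (PowerSeries.mk fun n => (b p a r m v n : ℤ)))
    apply tendsto_pi_nhds.2
    intro x
    have hcoe : ∀ f : PowerSeries ℤ, f x = coeff (R := ℤ) (x ()) f := by
      intro f
      conv_lhs => rw [Finsupp.unique_single x]
      rfl
    refine Filter.Tendsto.congr' ?_ tendsto_const_nhds
    filter_upwards [Filter.eventually_ge_atTop (Finset.range (x ()))] with s hs
    show (PowerSeries.mk fun n => (b p a r m v n : ℤ)) x = (∏ k ∈ s, G k) x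
    rw [hcoe (PowerSeries.mk fun n => (b p a r m v n : ℤ)), hcoe (∏ k ∈ s, G k),
      key (x ()) s hs, coeff_mk]
  calc PowerSeries.mk (fun n => (b p a r m v n : ℤ)) = ∏' k, G k := hHP.tprod_eq.symm
    _ = _ := tprod_congr hfac
end

section
/- As formal power series in q with integer coefficients, (∏_{n=1}^{∞} (1 − q^{(pr+a)n})) · Σ_{n=0}^{∞} b_{v,r,a,m}(n) qⁿ = ∏_{n=1}^{∞} (1 − q^{v(pr+a)n})(1 − q^{pmn}) / (1 − q^{pn}). -/
open PowerSeries

namespace BAux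

noncomputable section

open Finset

open scoped Classical

/-- Copied from Archive/Wiedijk100Theorems/Partition.lean. -/
def indicatorSeries (α : Type*) [Semiring α] (s : Set ℕ) : PowerSeries α :=
  PowerSeries.mk fun n => if n ∈ s then 1 else 0

variable {α : Type*}

theorem coeff_indicator (s : Set ℕ) [Semiring α] (n : ℕ) :
    coeff (R := α) n (indicatorSeries _ s) = if n ∈ s then 1 else 0 :=
  coeff_mk _ _

-- The main workhorse, copied from Archive/Wiedijk100Theorems/Partition.lean.
theorem partialGF_prop (α : Type*) [CommSemiring α] (n : ℕ) (s : Finset ℕ) (hs : ∀ i ∈ s, 0 < i)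
    (c : ℕ → Set ℕ) (hc : ∀ i, i ∉ s → 0 ∈ c i) :
    #{p : n.Partition | (∀ j, p.parts.count j ∈ c j) ∧ ∀ j ∈ p.parts, j ∈ s} =
      coeff (R := α) n (∏ i ∈ s, indicatorSeries α ((· * i) '' c i)) := by
  simp_rw [coeff_prod, coeff_indicator, prod_boole, sum_boole]
  apply congr_arg
  simp only [mem_univ, forall_true_left, not_and, not_forall, exists_prop,
    Set.mem_image, not_exists]
  set φ : (a : Nat.Partition n) →
    a ∈ filter (fun p ↦ (∀ (j : ℕ), Multiset.count j p.parts ∈ c j) ∧ ∀ j ∈ p.parts, j ∈ s) univ →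
    ℕ →₀ ℕ := fun p _ => {
      toFun := fun i => Multiset.count i p.parts • i
      support := Finset.filter (fun i => i ≠ 0) p.parts.toFinset
      mem_support_toFun := fun a => by
        simp only [smul_eq_mul, ne_eq, mul_eq_zero, Multiset.count_eq_zero]
        rw [not_or, not_not]
        simp only [Multiset.mem_toFinset, not_not, mem_filter] }
  refine Finset.card_bij φ ?_ ?_ ?_
  · intro a ha
    simp only [φ, not_forall, not_exists, not_and, exists_prop, mem_filter]
    rw [mem_finsuppAntidiag]
    dsimp only [ne_eq, smul_eq_mul, id_eq, eq_mpr_eq_cast, le_eq_subset, Finsupp.coe_mk]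
    simp only [mem_univ, forall_true_left, not_and, not_forall, exists_prop,
      mem_filter, true_and] at ha
    refine ⟨⟨?_, fun i ↦ ?_⟩, fun i _ ↦ ⟨a.parts.count i, ha.1 i, rfl⟩⟩
    · conv_rhs => simp [← a.parts_sum]
      rw [sum_multiset_count_of_subset _ s]
      · simp only [smul_eq_mul]
      · intro i
        simp only [Multiset.mem_toFinset, not_not, mem_filter]
        apply ha.2
    · simp only [ne_eq, Multiset.mem_toFinset, not_not, mem_filter, and_imp]
      exact fun hi _ ↦ ha.2 i hi
  · intro p₁ hp₁ p₂ hp₂ h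
    apply Nat.Partition.ext
    simp only [true_and, mem_univ, mem_filter] at hp₁ hp₂
    ext i
    simp only [φ, ne_eq, Multiset.mem_toFinset, not_not, smul_eq_mul, Finsupp.mk.injEq] at h
    by_cases hi : i = 0
    · rw [hi]
      rw [Multiset.count_eq_zero_of_notMem]
      · rw [Multiset.count_eq_zero_of_notMem]
        intro a; exact Nat.lt_irrefl 0 (hs 0 (hp₂.2 0 a))
      intro a; exact Nat.lt_irrefl 0 (hs 0 (hp₁.2 0 a))
    · rw [← mul_left_inj' hi]
      rw [funext_iff] at h
      exact h.2 i
  · simp only [φ, mem_filter, mem_finsuppAntidiag, mem_univ, exists_prop, true_and, and_assoc]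
    rintro f ⟨hf, hf₃, hf₄⟩
    have hf' : f ∈ finsuppAntidiag s n := mem_finsuppAntidiag.mpr ⟨hf, hf₃⟩
    simp only [mem_finsuppAntidiag] at hf'
    refine ⟨⟨∑ i ∈ s, Multiset.replicate (f i / i) i, ?_, ?_⟩, ?_, ?_, ?_⟩
    · intro i hi
      simp only [exists_prop, Multiset.mem_sum, mem_map, Function.Embedding.coeFn_mk] at hi
      rcases hi with ⟨t, ht, z⟩
      apply hs
      rwa [Multiset.eq_of_mem_replicate z]
    · simp_rw [Multiset.sum_sum, Multiset.sum_replicate, Nat.nsmul_eq_mul]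
      rw [← hf'.1]
      refine sum_congr rfl fun i hi => Nat.div_mul_cancel ?_
      rcases hf₄ i hi with ⟨w, _, hw₂⟩
      rw [← hw₂]
      exact dvd_mul_left _ _
    · intro i
      simp_rw [Multiset.count_sum', Multiset.count_replicate, sum_ite_eq']
      split_ifs with h
      · rcases hf₄ i h with ⟨w, hw₁, hw₂⟩
        rwa [← hw₂, Nat.mul_div_cancel _ (hs i h)]
      · exact hc _ h
    · intro i hi
      rw [Multiset.mem_sum] at hi
      rcases hi with ⟨j, hj₁, hj₂⟩
      rwa [Multiset.eq_of_mem_replicate hj₂]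
    · ext i
      simp_rw [Multiset.count_sum', Multiset.count_replicate, sum_ite_eq']
      simp only [ne_eq, Multiset.mem_toFinset, not_not, smul_eq_mul, ite_mul,
        zero_mul, Finsupp.coe_mk]
      split_ifs with h
      · apply Nat.div_mul_cancel
        rcases hf₄ i h with ⟨w, _, hw₂⟩
        apply Dvd.intro_left _ hw₂
      · apply symm
        rw [← Finsupp.notMem_support_iff]
        exact notMem_mono hf'.2 h




open Finset

instance : T2Space (PowerSeries ℤ) :=
  inferInstanceAs (T2Space ((Unit →₀ ℕ) → ℤ))

instance : ContinuousMul (PowerSeries ℤ) := by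
  constructor
  apply continuous_pi
  intro x
  have h : (fun fg : PowerSeries ℤ × PowerSeries ℤ => (fg.1 * fg.2) x) =
      fun fg : PowerSeries ℤ × PowerSeries ℤ =>
        ∑ p ∈ Finset.HasAntidiagonal.antidiagonal x, fg.1 p.1 * fg.2 p.2 := by
    funext fg
    exact MvPowerSeries.coeff_mul x fg.1 fg.2
  rw [h]
  exact continuous_finset_sum _ fun p _ =>
    ((continuous_apply p.1).comp continuous_fst).mul ((continuous_apply p.2).comp continuous_snd)

theorem coeff_eq_apply (h : PowerSeries ℤ) (x : Unit →₀ ℕ) :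
    h x = PowerSeries.coeff (R := ℤ) (x ()) h := by
  conv_lhs => rw [Finsupp.unique_single x]
  rfl

theorem coeff_mul_eq_of_tail (d : ℕ) (g h : PowerSeries ℤ)
    (hh : ∀ j ≤ d, coeff (R := ℤ) j h = if j = 0 then 1 else 0) :
    coeff (R := ℤ) d (g * h) = coeff (R := ℤ) d g := by
  rw [PowerSeries.coeff_mul, Finset.sum_eq_single (d, 0)]
  · rw [hh 0 (Nat.zero_le d), if_pos rfl, mul_one]
  · rintro ⟨i, j⟩ hmem hne
    rw [Finset.HasAntidiagonal.mem_antidiagonal] at hmem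
    have hj : j ≤ d := by omega
    have hj0 : j ≠ 0 := by
      rintro rfl
      exact hne (by simp_all)
    rw [hh j hj, if_neg hj0, mul_zero]
  · intro hmem
    exact absurd (Finset.HasAntidiagonal.mem_antidiagonal.mpr (by simp)) hmem

theorem coeff_mul_prod_tail (d : ℕ) (f : ℕ → PowerSeries ℤ) (g : PowerSeries ℤ)
    (u : Finset ℕ) (hu : ∀ k ∈ u, ∀ j ≤ d, coeff (R := ℤ) j (f k) = if j = 0 then 1 else 0) :
    coeff (R := ℤ) d (g * ∏ k ∈ u, f k) = coeff (R := ℤ) d g := by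
  classical
  induction u using Finset.induction_on with
  | empty => simp
  | @insert a u' hx ih =>
    rw [Finset.prod_insert hx, show g * (f a * ∏ k ∈ u', f k) = g * (∏ k ∈ u', f k) * f a by ring,
      coeff_mul_eq_of_tail d _ _ (hu a (Finset.mem_insert_self a u'))]
    exact ih fun k hk => hu k (Finset.mem_insert_of_mem hk)

theorem coeff_prod_subset (d : ℕ) (f : ℕ → PowerSeries ℤ) (s : Finset ℕ)
    (hs : Finset.range (d + 1) ⊆ s)
    (hf : ∀ k, d < k → ∀ j ≤ d, coeff (R := ℤ) j (f k) = if j = 0 then 1 else 0) :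
    coeff (R := ℤ) d (∏ k ∈ s, f k) = coeff (R := ℤ) d (∏ k ∈ Finset.range (d + 1), f k) := by
  classical
  rw [← Finset.prod_sdiff hs, mul_comm]
  apply coeff_mul_prod_tail
  intro k hk
  apply hf
  rcases Finset.mem_sdiff.mp hk with ⟨_, hk2⟩
  by_contra hdk
  exact hk2 (Finset.mem_range.mpr (by omega))

theorem hasProd_of_coeff (f : ℕ → PowerSeries ℤ) (g : PowerSeries ℤ)
    (hf : ∀ k, ∀ j ≤ k, coeff (R := ℤ) j (f k) = if j = 0 then 1 else 0)
    (hg : ∀ d, coeff (R := ℤ) d (∏ k ∈ Finset.range (d + 1), f k) = coeff (R := ℤ) d g) :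
    HasProd f g := by
  rw [HasProd]
  refine tendsto_pi_nhds.mpr ?_
  intro x
  refine Filter.Tendsto.congr' ?_ tendsto_const_nhds
  filter_upwards [Filter.eventually_ge_atTop (Finset.range (x () + 1))] with s hs
  rw [coeff_eq_apply g x, coeff_eq_apply (∏ b ∈ s, f b) x,
    coeff_prod_subset (x ()) f s hs ?_, hg]
  intro k hk j hj
  have : j ≤ k := le_of_lt (lt_of_le_of_lt hj hk)
  exact hf k j this
theorem indicator_sum {γ : Type*} [DecidableEq γ] (s : Finset γ) (g : γ → ℕ)
    (hg : Set.InjOn g s) :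
    indicatorSeries ℤ (g '' s) = ∑ x ∈ s, (X : PowerSeries ℤ) ^ g x := by
  ext n
  rw [coeff_indicator, map_sum]
  simp_rw [coeff_X_pow]
  by_cases h : n ∈ g '' (s : Set γ)
  · obtain ⟨x₀, hx₀s, hgx₀⟩ := h
    rw [if_pos ⟨x₀, hx₀s, hgx₀⟩, Finset.sum_eq_single x₀]
    · rw [if_pos hgx₀.symm]
    · intro x hx hne
      rw [if_neg]
      intro hnx
      exact hne (hg hx hx₀s (by rw [← hnx, hgx₀]))
    · intro hx
      exact absurd hx₀s hx
  · rw [if_neg h, Finset.sum_eq_zero]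
    intro x hx
    rw [if_neg]
    intro hnx
    exact h ⟨x, hx, hnx.symm⟩

theorem cancel_jt (p a r v : ℕ) (hp : 0 < p) (hco : Nat.gcd a p = 1) (hvp : v ≤ p)
    {j j' t t' : ℕ} (hj : j < v) (hj' : j' < v)
    (h : j * (p * r + a) + p * t = j' * (p * r + a) + p * t') : j = j' ∧ t = t' := by
  have e1 : j * (p * r + a) + p * t = j * a + (j * r + t) * p := by ring
  have e2 : j' * (p * r + a) + p * t' = j' * a + (j' * r + t') * p := by ring
  have hmod : j * a ≡ j' * a [MOD p] := by
    show j * a % p = j' * a % p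
    calc j * a % p = (j * a + (j * r + t) * p) % p := (Nat.add_mul_mod_self_right _ _ _).symm
      _ = (j' * a + (j' * r + t') * p) % p := by rw [← e1, ← e2, h]
      _ = j' * a % p := Nat.add_mul_mod_self_right _ _ _
  have hjj : j ≡ j' [MOD p] := Nat.ModEq.cancel_right_of_coprime (Nat.Coprime.symm hco) hmod
  have hj2 : j % p = j' % p := hjj
  rw [Nat.mod_eq_of_lt (lt_of_lt_of_le hj hvp), Nat.mod_eq_of_lt (lt_of_lt_of_le hj' hvp)] at hj2
  subst hj2
  refine ⟨rfl, Nat.eq_of_mul_eq_mul_left hp (Nat.add_left_cancel h)⟩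

theorem mult_iff (p a r m v : ℕ) (hp : 0 < p) (hm : 1 ≤ m) (k : ℕ) :
    (∃ j, j < v ∧ k ≡ j * a [MOD p] ∧ j * (p * r + a) ≤ k ∧
        k ≤ j * (p * r + a) + p * (m - 1)) ↔
      (∃ j < v, ∃ t < m, k = j * (p * r + a) + p * t) := by
  have base : ∀ j t : ℕ, (j * (p * r + a) + p * t) % p = j * a % p := by
    intro j t
    calc (j * (p * r + a) + p * t) % p = (j * a + (j * r + t) * p) % p := by ring_nf
      _ = j * a % p := Nat.add_mul_mod_self_right _ _ _
  constructor
  · rintro ⟨j, hj, hmod, hle, hub⟩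
    have hcj : j * (p * r + a) ≡ k [MOD p] := by
      show j * (p * r + a) % p = k % p
      rw [show j * (p * r + a) = j * (p * r + a) + p * 0 by ring] at *
      rw [base j 0]
      exact (hmod : k % p = _).symm
    obtain ⟨t, ht⟩ := (Nat.modEq_iff_dvd' hle).mp hcj
    have hk : k = j * (p * r + a) + p * t := by omega
    have htm : t < m := by
      have h1 : p * t ≤ p * (m - 1) := by omega
      have := Nat.le_of_mul_le_mul_left h1 hp
      omega
    exact ⟨j, hj, t, htm, hk⟩
  · rintro ⟨j, hj, t, ht, rfl⟩
    refine ⟨j, hj, ?_, Nat.le_add_right _ _, ?_⟩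
    · exact (base j t : _)
    · have h1 : t ≤ m - 1 := by omega
      have h2 : p * t ≤ p * (m - 1) := Nat.mul_le_mul_left p h1
      omega

theorem bcard (p a r m v : ℕ) (hp : 0 < p) (hm : 1 ≤ m) (hv : 1 ≤ v) (n : ℕ)
    (s : Finset ℕ) (hs : ∀ i ∈ s, 0 < i) (hsub : ∀ i, 1 ≤ i → i ≤ n → i ∈ s) :
    (b p a r m v n : ℤ) =
      coeff (R := ℤ) n (∏ i ∈ s,
        indicatorSeries ℤ ((· * i) '' {x | ∃ j < v, ∃ t < m, x = j * (p * r + a) + p * t})) := by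
  classical
  rw [← partialGF_prop ℤ n s hs (fun _ => {x | ∃ j < v, ∃ t < m, x = j * (p * r + a) + p * t})
    (fun i _ => ⟨0, hv, 0, hm, by simp⟩)]
  norm_cast
  rw [b, Nat.card_eq_fintype_card, Fintype.card_subtype]
  congr 1
  apply Finset.filter_congr
  intro π _
  constructor
  · intro h1
    constructor
    · intro i
      by_cases hi : i ∈ π.parts
      · exact (mult_iff p a r m v hp hm _).mp (h1 i hi)
      · rw [Multiset.count_eq_zero_of_notMem hi]
        exact ⟨0, hv, 0, hm, by simp⟩
    · intro i hi
      have hin : i ≤ n := by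
        have hsum := π.parts_sum
        obtain ⟨u, hu⟩ := Multiset.exists_cons_of_mem hi
        rw [hu, Multiset.sum_cons] at hsum
        omega
      exact hsub i (π.parts_pos hi) hin
  · rintro ⟨h1, _⟩ i hi
    exact (mult_iff p a r m v hp hm _).mpr (h1 i)

theorem F_form (p a r v m : ℕ) (hp : 0 < p) (hco : Nat.gcd a p = 1) (hvp : v ≤ p)
    (i : ℕ) (hi : 0 < i) :
    indicatorSeries ℤ ((· * i) '' {x | ∃ j < v, ∃ t < m, x = j * (p * r + a) + p * t}) =
      (∑ j ∈ range v, ((X : PowerSeries ℤ) ^ ((p * r + a) * i)) ^ j) *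
        (∑ t ∈ range m, ((X : PowerSeries ℤ) ^ (p * i)) ^ t) := by
  classical
  have himg : (· * i) '' {x | ∃ j < v, ∃ t < m, x = j * (p * r + a) + p * t} =
      (fun jt : ℕ × ℕ => (p * r + a) * i * jt.1 + p * i * jt.2) ''
        ((range v ×ˢ range m : Finset (ℕ × ℕ)) : Set (ℕ × ℕ)) := by
    ext x
    simp only [Set.mem_image, Set.mem_setOf_eq, Finset.mem_coe, Finset.mem_product,
      Finset.mem_range]
    constructor
    · rintro ⟨y, ⟨j, hj, t, ht, rfl⟩, rfl⟩
      exact ⟨(j, t), ⟨hj, ht⟩, by ring⟩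
    · rintro ⟨⟨j, t⟩, ⟨hj, ht⟩, rfl⟩
      exact ⟨j * (p * r + a) + p * t, ⟨j, hj, t, ht, rfl⟩, by ring⟩
  have hinj : Set.InjOn (fun jt : ℕ × ℕ => (p * r + a) * i * jt.1 + p * i * jt.2)
      ((range v ×ˢ range m : Finset (ℕ × ℕ)) : Set (ℕ × ℕ)) := by
    rintro ⟨j, t⟩ hjt ⟨j', t'⟩ hjt' heq
    simp only [Finset.mem_coe, Finset.mem_product, Finset.mem_range] at hjt hjt'
    simp only at heq
    have h0 : (j * (p * r + a) + p * t) * i = (j' * (p * r + a) + p * t') * i := by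
      calc (j * (p * r + a) + p * t) * i = (p * r + a) * i * j + p * i * t := by ring
        _ = (p * r + a) * i * j' + p * i * t' := heq
        _ = (j' * (p * r + a) + p * t') * i := by ring
    have h1 := Nat.eq_of_mul_eq_mul_right hi h0
    obtain ⟨rfl, rfl⟩ := cancel_jt p a r v hp hco hvp hjt.1 hjt'.1 h1
    rfl
  rw [himg, indicator_sum _ _ hinj, Finset.sum_product, Finset.sum_mul_sum]
  refine Finset.sum_congr rfl fun j _ => Finset.sum_congr rfl fun t _ => ?_
  simp [pow_add, pow_mul]

end

end BAux

open BAux Finset in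
/-- The identity
`(∏_{n≥1} (1 - q^{(pr+a)n})) · Σ_{n≥0} b_{v,r,a,m}(n) qⁿ
  = ∏_{n≥1} (1 - q^{v(pr+a)n})(1 - q^{pmn}) / (1 - q^{pn})`
(product indices below are shifted: `k + 1` plays the role of `n ≥ 1`). -/
theorem b_genFun_cleared (p a r m v : ℕ) (hp : 0 < p) (ha : 0 < a)
    (hco : Nat.gcd a p = 1) (hm : 1 ≤ m) (hv : 1 ≤ v) (hvp : v ≤ p) :
    (∏' k : ℕ, (1 - (X : PowerSeries ℤ) ^ ((p * r + a) * (k + 1)))) *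
        PowerSeries.mk (fun n => (b p a r m v n : ℤ)) =
      ∏' k : ℕ,
        (1 - (X : PowerSeries ℤ) ^ (v * (p * r + a) * (k + 1))) *
          (1 - (X : PowerSeries ℤ) ^ (p * m * (k + 1))) *
          psInv (1 - (X : PowerSeries ℤ) ^ (p * (k + 1))) := by
  classical
  have hc0 : 0 < p * r + a := by omega
  set F : ℕ → PowerSeries ℤ := fun i =>
    indicatorSeries ℤ ((· * i) '' {x | ∃ j < v, ∃ t < m, x = j * (p * r + a) + p * t}) with hF
  set A : ℕ → PowerSeries ℤ := fun k => 1 - X ^ ((p * r + a) * (k + 1)) with hA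
  have htailA : ∀ k, ∀ j ≤ k, coeff (R := ℤ) j (A k) = if j = 0 then 1 else 0 := by
    intro k j hj
    simp only [hA, map_sub, coeff_one, coeff_X_pow]
    have hne : j ≠ (p * r + a) * (k + 1) := by
      have : k + 1 ≤ (p * r + a) * (k + 1) := Nat.le_mul_of_pos_left _ hc0
      omega
    rw [if_neg hne, sub_zero]
  have htailF : ∀ k, ∀ j ≤ k, coeff (R := ℤ) j (F (k + 1)) = if j = 0 then 1 else 0 := by
    intro k j hj
    simp only [hF]
    rw [coeff_indicator]
    by_cases hj0 : j = 0
    · subst hj0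
      rw [if_pos ⟨0, ⟨0, hv, 0, hm, by simp⟩, by simp⟩, if_pos rfl]
    · rw [if_neg ?_, if_neg hj0]
      rintro ⟨y, ⟨j', hj', t, ht, rfl⟩, hyx⟩
      simp only at hyx
      have hy1 : 1 ≤ j' * (p * r + a) + p * t := by
        rcases Nat.eq_zero_or_pos (j' * (p * r + a) + p * t) with h0 | h0
        · rw [h0, zero_mul] at hyx; exact absurd hyx.symm hj0
        · exact h0
      have : k + 1 ≤ (j' * (p * r + a) + p * t) * (k + 1) := Nat.le_mul_of_pos_left _ hy1
      omega
  set gA : PowerSeries ℤ := PowerSeries.mk fun d =>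
    coeff (R := ℤ) d (∏ k ∈ Finset.range (d + 1), A k) with hgA
  have hPA : HasProd A gA :=
    hasProd_of_coeff A gA htailA fun d => by rw [hgA, coeff_mk]
  have hcoeffF : ∀ d, coeff (R := ℤ) d (∏ k ∈ Finset.range (d + 1), F (k + 1)) =
      coeff (R := ℤ) d (PowerSeries.mk fun n => (b p a r m v n : ℤ)) := by
    intro d
    rw [coeff_mk]
    have himage : ∏ k ∈ Finset.range (d + 1), F (k + 1) =
        ∏ i ∈ (Finset.range (d + 1)).image (· + 1), F i :=
      (Finset.prod_image (by intro x _ y _ h; simp only at h; omega)).symm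
    rw [himage]
    refine (bcard p a r m v hp hm hv d _ ?_ ?_).symm
    · intro i hi
      simp only [Finset.mem_image, Finset.mem_range] at hi
      omega
    · intro i h1 h2
      simp only [Finset.mem_image, Finset.mem_range]
      exact ⟨i - 1, by omega, by omega⟩
  have hPF : HasProd (fun k => F (k + 1)) (PowerSeries.mk fun n => (b p a r m v n : ℤ)) :=
    hasProd_of_coeff _ _ htailF hcoeffF
  have hPG : HasProd (fun k => A k * F (k + 1))
      (gA * PowerSeries.mk fun n => (b p a r m v n : ℤ)) := hPA.mul hPF
  have hfac : ∀ k, A k * F (k + 1) =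
      (1 - (X : PowerSeries ℤ) ^ (v * (p * r + a) * (k + 1))) *
        (1 - (X : PowerSeries ℤ) ^ (p * m * (k + 1))) *
        psInv (1 - (X : PowerSeries ℤ) ^ (p * (k + 1))) := by
    intro k
    have hu : (1 - (X : PowerSeries ℤ) ^ (p * (k + 1))) *
        psInv (1 - (X : PowerSeries ℤ) ^ (p * (k + 1))) = 1 := by
      apply PowerSeries.mul_invOfUnit
      have hX : constantCoeff (R := ℤ) ((X : PowerSeries ℤ) ^ (p * (k + 1))) = 0 := by
        rw [map_pow, constantCoeff_X, zero_pow (Nat.mul_ne_zero hp.ne' (Nat.succ_ne_zero k))]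
      simp [hX]
    have hg : (1 - (X : PowerSeries ℤ) ^ (p * (k + 1))) *
        (∑ t ∈ range m, ((X : PowerSeries ℤ) ^ (p * (k + 1))) ^ t) =
        1 - (X : PowerSeries ℤ) ^ (p * m * (k + 1)) := by
      rw [mul_neg_geom_sum, ← pow_mul, show p * (k + 1) * m = p * m * (k + 1) by ring]
    have hS2 : (∑ t ∈ range m, ((X : PowerSeries ℤ) ^ (p * (k + 1))) ^ t) =
        (1 - (X : PowerSeries ℤ) ^ (p * m * (k + 1))) *
          psInv (1 - (X : PowerSeries ℤ) ^ (p * (k + 1))) := by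
      calc (∑ t ∈ range m, ((X : PowerSeries ℤ) ^ (p * (k + 1))) ^ t)
          = (∑ t ∈ range m, ((X : PowerSeries ℤ) ^ (p * (k + 1))) ^ t) *
            ((1 - (X : PowerSeries ℤ) ^ (p * (k + 1))) *
              psInv (1 - (X : PowerSeries ℤ) ^ (p * (k + 1)))) := by rw [hu, mul_one]
        _ = ((1 - (X : PowerSeries ℤ) ^ (p * (k + 1))) *
              (∑ t ∈ range m, ((X : PowerSeries ℤ) ^ (p * (k + 1))) ^ t)) *
            psInv (1 - (X : PowerSeries ℤ) ^ (p * (k + 1))) := by ring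
        _ = (1 - (X : PowerSeries ℤ) ^ (p * m * (k + 1))) *
            psInv (1 - (X : PowerSeries ℤ) ^ (p * (k + 1))) := by rw [hg]
    simp only [hF, hA]
    rw [F_form p a r v m hp hco hvp (k + 1) (Nat.succ_pos k), ← mul_assoc,
      mul_neg_geom_sum, hS2, ← pow_mul,
      show (p * r + a) * (k + 1) * v = v * (p * r + a) * (k + 1) by ring]
    ring
  have hfeq : (fun k => A k * F (k + 1)) =
      fun k => (1 - (X : PowerSeries ℤ) ^ (v * (p * r + a) * (k + 1))) *
        (1 - (X : PowerSeries ℤ) ^ (p * m * (k + 1))) *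
        psInv (1 - (X : PowerSeries ℤ) ^ (p * (k + 1))) := funext hfac
  rw [hfeq] at hPG
  rw [show (∏' k : ℕ, (1 - (X : PowerSeries ℤ) ^ ((p * r + a) * (k + 1)))) = gA from
    hPA.tprod_eq]
  exact hPG.tprod_eq.symm
end
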